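/- Any realization of the quotient PDFA of A modulo E is state-minimal among all PDFAs whose language model is pointwise E-equivalent to that of A: the number of congruence classes of states of A equals the minimum number of states over all such PDFAs. -/
import Mathlib


/-- A probability distribution over `Option α` (the alphabet `α` extended with
the terminal symbol `$`, modeled as `none`). -/
def PDist (α : Type*) [Fintype α] : Type _ :=
  {f : Option α → ℝ // (∀ x, 0 ≤ f x) ∧ ∑ x, f x = 1}

/-- A probabilistic deterministic finite automaton with state space `Q`. -/
structure PDFA (Q : Type*) (α : Type*) [Fintype α] where
  init : Q
  out : Q → PDist α
  next : Q → α → Q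

variable {Q α : Type*} [Fintype α]

/-- Extension of the transition function to strings. -/
def PDFA.run (A : PDFA Q α) (q : Q) (u : List α) : Q := u.foldl A.next q

/-- The language model defined by a PDFA. -/
def PDFA.lm (A : PDFA Q α) (u : List α) : PDist α := A.out (A.run A.init u)

/-- The tolerance/congruence induced on strings by a language model `M` and a
relation `S` on distributions. -/
def strTol (M : List α → PDist α) (S : PDist α → PDist α → Prop) (u u' : List α) : Prop :=
  ∀ w : List α, S (M (u ++ w)) (M (u' ++ w))

/-- The tolerance/congruence induced on states of a PDFA. -/
def stateTol (A : PDFA Q α) (S : PDist α → PDist α → Prop) (q q' : Q) : Prop :=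
  ∀ w : List α, S (A.out (A.run q w)) (A.out (A.run q' w))

lemma PDFA.run_append (A : PDFA Q α) (q : Q) (u w : List α) :
    A.run q (u ++ w) = A.run (A.run q u) w := List.foldl_append ..

/-- Prop. 17 (paper): the number of classes of the state congruence of `A` is
the minimum number of states over all PDFAs whose language model is pointwise
`E`-equivalent to that of `A`. -/
theorem quotient_card_is_minimal {Q : Type} {α : Type} [Fintype α] [Fintype Q]
    (A : PDFA Q α) (E : PDist α → PDist α → Prop) (hE : Equivalence E)
    (hreach : ∀ q : Q, ∃ u : List α, A.run A.init u = q) :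
    IsLeast {n : ℕ | ∃ (Q' : Type) (_ : Fintype Q') (B : PDFA Q' α),
        (∀ u, E (B.lm u) (A.lm u)) ∧ n = Nat.card Q'}
      (Nat.card (Quot (stateTol A E))) := by
  classical
  have hst : Equivalence (stateTol A E) :=
    ⟨fun q w => hE.refl _, fun h w => hE.symm (h w),
     fun h1 h2 w => hE.trans (h1 w) (h2 w)⟩
  letI s : Setoid Q := ⟨stateTol A E, hst⟩
  have hfin : Finite (Quot (stateTol A E)) :=
    Finite.of_surjective (Quot.mk _) (Quot.mk_surjective)
  letI : Fintype (Quot (stateTol A E)) := Fintype.ofFinite _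
  constructor
  · -- membership: the quotient PDFA realizes an E-equivalent language model
    refine ⟨Quot (stateTol A E), inferInstance, ?_, ?_, rfl⟩
    · exact
      { init := Quot.mk _ A.init
        out := fun c => A.out (Quot.out c)
        next := fun c a =>
          Quot.lift (fun q => Quot.mk _ (A.next q a))
            (fun q q' h => Quot.sound (fun w => h (a :: w))) c }
    · intro u
      set B : PDFA (Quot (stateTol A E)) α :=
        { init := Quot.mk _ A.init
          out := fun c => A.out (Quot.out c)
          next := fun c a =>
            Quot.lift (fun q => Quot.mk _ (A.next q a))
              (fun q q' h => Quot.sound (fun w => h (a :: w))) c } with hBdef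
      have hrun : ∀ (u : List α) (q : Q),
          B.run (Quot.mk _ q) u = Quot.mk _ (A.run q u) := by
        intro u
        induction u with
        | nil => intro q; rfl
        | cons a u ih => intro q; exact ih (A.next q a)
      have hout : stateTol A E (Quot.out (Quot.mk (stateTol A E) (A.run A.init u)))
          (A.run A.init u) := by
        have := Quot.out_eq (Quot.mk (stateTol A E) (A.run A.init u))
        exact Quotient.exact (s := s) this
      have : B.lm u = A.out (Quot.out (Quot.mk (stateTol A E) (A.run A.init u))) := by
        unfold PDFA.lm
        rw [show B.init = Quot.mk (stateTol A E) A.init from rfl, hrun]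
      rw [this]
      exact hout []
  · -- lower bound
    rintro n ⟨Q', instQ', B, hB, rfl⟩
    -- congruent A-states from equal B-states
    have key : ∀ u u' : List α, B.run B.init u = B.run B.init u' →
        stateTol A E (A.run A.init u) (A.run A.init u') := by
      intro u u' h w
      have h1 : E (A.lm (u ++ w)) (B.lm (u ++ w)) := hE.symm (hB _)
      have h2 : B.lm (u ++ w) = B.lm (u' ++ w) := by
        unfold PDFA.lm
        rw [B.run_append, B.run_append, h]
      have h3 : E (B.lm (u' ++ w)) (A.lm (u' ++ w)) := hB _
      have := hE.trans h1 (h2 ▸ h3)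
      simpa [PDFA.lm, PDFA.run_append] using this
    let ψ : Q' → Quot (stateTol A E) := fun q' =>
      if h : ∃ u, B.run B.init u = q' then Quot.mk _ (A.run A.init h.choose)
      else Quot.mk _ A.init
    have hsurj : Function.Surjective ψ := by
      intro c
      induction c using Quot.ind with
      | _ q =>
        obtain ⟨u, hu⟩ := hreach q
        refine ⟨B.run B.init u, ?_⟩
        have hex : ∃ u', B.run B.init u' = B.run B.init u := ⟨u, rfl⟩
        have : ψ (B.run B.init u) = Quot.mk _ (A.run A.init hex.choose) := dif_pos hex
        rw [this, ← hu]
        exact Quot.sound (key _ _ hex.choose_spec)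
    exact Nat.card_le_card_of_surjective ψ hsurj
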